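/- The limits of Proposition 3.1 provide solutions of the difference system Ψ(z+1) = v·B̃(z)·Ψ(z) (claim underlying Definition 3.2): let v be an admissible diagonal matrix and s ∈ {1,…,μ}. (i) Suppose z and z+1 both lie outside ℤ^{<0} + Λ, and that both limits R_s(z) := lim_{p→∞} p^{−zI−B_{ss}}·(v_s^{−p}/p!)·(∏^{←}_{m=1}^p v·B̃(m+z))_{s∗} and R_s(z+1) := lim_{p→∞} p^{−(z+1)I−B_{ss}}·(v_s^{−p}/p!)·(∏^{←}_{m=1}^p v·B̃(m+z+1))_{s∗} exist. Then R_s(z+1)·v·B̃(1+z) = v_s·R_s(z). (ii) Suppose z and z+1 both lie outside ℤ^{>0} + Λ, and that both limits C_s(z) := lim_{p→∞} (∏^{←}_{m=−p}^{−1} v·B̃(m+z))_{∗s}·((−v_s)^{−p}/p!)·p^{zI+B_{ss}} and C_s(z+1) := lim_{p→∞} (∏^{←}_{m=−p}^{−1} v·B̃(m+z+1))_{∗s}·((−v_s)^{−p}/p!)·p^{(z+1)I+B_{ss}} exist. Then v·B̃(z)·C_s(z) = −v_s·C_s(z+1). -/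

import Mathlib

/-!
Statement 11: the limits of Proposition 3.1 provide canonical solutions of the
difference system `Ψ(z+1) = v·B̃(z)·Ψ(z)`.
-/

noncomputable section

open Filter
open scoped Topology

/-- The `k`-th diagonal block `B_{kk}` of a `μ×μ`-blocked matrix. -/
def diagBlock {μ : ℕ} {n : Fin μ → ℕ}
    (B : Matrix (Σ k : Fin μ, Fin (n k)) (Σ k : Fin μ, Fin (n k)) ℂ) (k : Fin μ) :
    Matrix (Fin (n k)) (Fin (n k)) ℂ :=
  Matrix.of fun a b => B ⟨k, a⟩ ⟨k, b⟩

/-- The `s`-th block row `Y_{s∗}` of a blocked matrix. -/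
def blockRow {μ : ℕ} {n : Fin μ → ℕ}
    (Y : Matrix (Σ k : Fin μ, Fin (n k)) (Σ k : Fin μ, Fin (n k)) ℂ) (s : Fin μ) :
    Matrix (Fin (n s)) (Σ k : Fin μ, Fin (n k)) ℂ :=
  Matrix.of fun a j => Y ⟨s, a⟩ j

/-- The `s`-th block column `Y_{∗s}` of a blocked matrix. -/
def blockCol {μ : ℕ} {n : Fin μ → ℕ}
    (Y : Matrix (Σ k : Fin μ, Fin (n k)) (Σ k : Fin μ, Fin (n k)) ℂ) (s : Fin μ) :
    Matrix (Σ k : Fin μ, Fin (n k)) (Fin (n s)) ℂ :=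
  Matrix.of fun i b => Y i ⟨s, b⟩

/-- The diagonal matrix `v = diag(v_1 I_{n_1}, …, v_μ I_{n_μ})`. -/
def vDiag {μ : ℕ} (n : Fin μ → ℕ) (v : Fin μ → ℂ) :
    Matrix (Σ k : Fin μ, Fin (n k)) (Σ k : Fin μ, Fin (n k)) ℂ :=
  Matrix.diagonal fun i => v i.1

/-- The ordered product `∏^{←}_{m=1}^p v·B̃(m+z) = (v·B̃(p+z))⋯(v·B̃(1+z))`. -/
def prodPos {μ : ℕ} (n : Fin μ → ℕ)
    (Btilde : ℂ → Matrix (Σ k : Fin μ, Fin (n k)) (Σ k : Fin μ, Fin (n k)) ℂ)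
    (v : Fin μ → ℂ) (z : ℂ) :
    ℕ → Matrix (Σ k : Fin μ, Fin (n k)) (Σ k : Fin μ, Fin (n k)) ℂ
  | 0 => 1
  | p + 1 => (vDiag n v * Btilde (((p : ℂ) + 1) + z)) * prodPos n Btilde v z p

/-- The ordered product `∏^{←}_{m=−p}^{−1} v·B̃(m+z) = (v·B̃(−1+z))⋯(v·B̃(−p+z))`. -/
def prodNeg {μ : ℕ} (n : Fin μ → ℕ)
    (Btilde : ℂ → Matrix (Σ k : Fin μ, Fin (n k)) (Σ k : Fin μ, Fin (n k)) ℂ)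
    (v : Fin μ → ℂ) (z : ℂ) :
    ℕ → Matrix (Σ k : Fin μ, Fin (n k)) (Σ k : Fin μ, Fin (n k)) ℂ
  | 0 => 1
  | p + 1 => prodNeg n Btilde v z p * (vDiag n v * Btilde (-((p : ℂ) + 1) + z))

/-- The normalized partial products in the positive direction, whose limit is
`R_s(z)`. -/
def seqPos {μ : ℕ} (n : Fin μ → ℕ)
    (Btilde : ℂ → Matrix (Σ k : Fin μ, Fin (n k)) (Σ k : Fin μ, Fin (n k)) ℂ)
    (B : Matrix (Σ k : Fin μ, Fin (n k)) (Σ k : Fin μ, Fin (n k)) ℂ)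
    (v : Fin μ → ℂ) (s : Fin μ) (z : ℂ) (p : ℕ) :
    Matrix (Fin (n s)) (Σ k : Fin μ, Fin (n k)) ℂ :=
  ((v s ^ p)⁻¹ / (Nat.factorial p : ℂ)) •
    (NormedSpace.exp
        (((Real.log p : ℝ) : ℂ) •
          (-(z • (1 : Matrix (Fin (n s)) (Fin (n s)) ℂ)) - diagBlock B s)) *
      blockRow (prodPos n Btilde v z p) s)

/-- The normalized partial products in the negative direction, whose limit is
`C_s(z)`. -/
def seqNeg {μ : ℕ} (n : Fin μ → ℕ)
    (Btilde : ℂ → Matrix (Σ k : Fin μ, Fin (n k)) (Σ k : Fin μ, Fin (n k)) ℂ)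
    (B : Matrix (Σ k : Fin μ, Fin (n k)) (Σ k : Fin μ, Fin (n k)) ℂ)
    (v : Fin μ → ℂ) (s : Fin μ) (z : ℂ) (p : ℕ) :
    Matrix (Σ k : Fin μ, Fin (n k)) (Fin (n s)) ℂ :=
  (((-v s) ^ p)⁻¹ / (Nat.factorial p : ℂ)) •
    (blockCol (prodNeg n Btilde v z p) s *
      NormedSpace.exp
        (((Real.log p : ℝ) : ℂ) •
          (z • (1 : Matrix (Fin (n s)) (Fin (n s)) ℂ) + diagBlock B s)))

open Filter NormedSpace
open scoped Topology

namespace St11Aux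
variable {m : Type*} [Fintype m] [DecidableEq m]

lemma myexp_tendsto_one {f : ℕ → Matrix m m ℂ} (hf : Tendsto f atTop (𝓝 0)) :
    Tendsto (fun p => exp (f p)) atTop (𝓝 1) := by
  letI : SeminormedRing (Matrix m m ℂ) := Matrix.linftyOpSemiNormedRing
  letI : NormedRing (Matrix m m ℂ) := Matrix.linftyOpNormedRing
  letI : NormedAlgebra ℂ (Matrix m m ℂ) := Matrix.linftyOpNormedAlgebra
  letI : NormedAlgebra ℚ (Matrix m m ℂ) := Matrix.linftyOpNormedAlgebra
  have h := NormedSpace.exp_continuous (𝔸 := Matrix m m ℂ)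
  have := (h.tendsto 0).comp hf
  rw [NormedSpace.exp_zero] at this
  exact this

lemma myexp_smul_one (c : ℂ) :
    exp (c • (1 : Matrix m m ℂ)) = Complex.exp c • (1 : Matrix m m ℂ) := by
  have h1 : c • (1 : Matrix m m ℂ) = algebraMap ℂ (Matrix m m ℂ) c := by
    simp [Algebra.algebraMap_eq_smul_one]
  letI : SeminormedRing (Matrix m m ℂ) := Matrix.linftyOpSemiNormedRing
  letI : NormedRing (Matrix m m ℂ) := Matrix.linftyOpNormedRing
  letI : NormedAlgebra ℂ (Matrix m m ℂ) := Matrix.linftyOpNormedAlgebra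
  letI : NormedAlgebra ℚ (Matrix m m ℂ) := Matrix.linftyOpNormedAlgebra
  rw [h1]
  refine Eq.trans (NormedSpace.algebraMap_exp_comm (𝔸 := Matrix m m ℂ) c).symm ?_
  rw [Algebra.algebraMap_eq_smul_one, Complex.exp_eq_exp_ℂ]

lemma myexp_mul_exp (A : Matrix m m ℂ) (x y : ℂ) :
    exp (x • A) * exp (y • A) = exp ((x + y) • A) := by
  rw [add_smul, Matrix.exp_add_of_commute _ _ (((Commute.refl A).smul_left x).smul_right y)]

lemma myexp_smul_add_one (A : Matrix m m ℂ) (x c : ℂ) :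
    exp (x • A + c • (1 : Matrix m m ℂ)) = Complex.exp c • exp (x • A) := by
  rw [Matrix.exp_add_of_commute _ _ ((Commute.one_right (x • A)).smul_right c),
    myexp_smul_one, mul_smul_comm, mul_one]

lemma tendsto_mat_mul {α : Type*} {l : Filter α} {a b c : Type*} [Fintype b]
    {f : α → Matrix a b ℂ} {g : α → Matrix b c ℂ} {F : Matrix a b ℂ} {G : Matrix b c ℂ}
    (hf : Tendsto f l (𝓝 F)) (hg : Tendsto g l (𝓝 G)) :
    Tendsto (fun x => f x * g x) l (𝓝 (F * G)) := by
  refine tendsto_pi_nhds.2 fun i => ?_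
  refine tendsto_pi_nhds.2 fun k => ?_
  simp only [Matrix.mul_apply]
  refine tendsto_finset_sum _ fun j _ => Tendsto.mul ?_ ?_
  · exact tendsto_pi_nhds.mp (tendsto_pi_nhds.mp hf i) j
  · exact tendsto_pi_nhds.mp (tendsto_pi_nhds.mp hg j) k

lemma tendsto_ratio : Tendsto (fun p : ℕ => ((p : ℂ) + 1) / (p : ℂ)) atTop (𝓝 1) := by
  have h0 : Tendsto (fun p : ℕ => ((p : ℂ))⁻¹) atTop (𝓝 0) := by
    have := (Complex.continuous_ofReal.tendsto 0).comp tendsto_inv_atTop_nhds_zero_nat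
    simpa only [Function.comp_def, Complex.ofReal_zero, Complex.ofReal_inv,
      Complex.ofReal_natCast] using this
  have h1 : Tendsto (fun p : ℕ => 1 + ((p : ℂ))⁻¹) atTop (𝓝 1) := by
    simpa using (tendsto_const_nhds (x := (1 : ℂ))).add h0
  refine h1.congr' ?_
  filter_upwards [eventually_ge_atTop 1] with p hp
  have hp0 : (p : ℂ) ≠ 0 := Nat.cast_ne_zero.2 (by omega)
  field_simp

lemma tendsto_logdiff :
    Tendsto (fun p : ℕ => ((Real.log (p + 1) - Real.log p : ℝ) : ℂ)) atTop (𝓝 0) := by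
  have hr : Tendsto (fun p : ℕ => Real.log (p + 1) - Real.log p) atTop (𝓝 0) := by
    have hq : Tendsto (fun p : ℕ => ((p : ℝ) + 1) / (p : ℝ)) atTop (𝓝 1) := by
      have h0 := tendsto_inv_atTop_nhds_zero_nat (𝕜 := ℝ)
      have h1 : Tendsto (fun p : ℕ => 1 + ((p : ℝ))⁻¹) atTop (𝓝 1) := by
        simpa using (tendsto_const_nhds (x := (1 : ℝ))).add h0
      refine h1.congr' ?_
      filter_upwards [eventually_ge_atTop 1] with p hp
      have hp0 : (p : ℝ) ≠ 0 := Nat.cast_ne_zero.2 (by omega)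
      field_simp
    have hlog : Tendsto (fun p : ℕ => Real.log (((p : ℝ) + 1) / (p : ℝ))) atTop (𝓝 0) := by
      have := (Real.continuousAt_log one_ne_zero).tendsto.comp hq
      simpa [Function.comp_def] using this
    refine hlog.congr' ?_
    filter_upwards [eventually_ge_atTop 1] with p hp
    have hp0 : (p : ℝ) ≠ 0 := Nat.cast_ne_zero.2 (by omega)
    rw [Real.log_div (by positivity) hp0]
  have := (Complex.continuous_ofReal.tendsto 0).comp hr
  simpa only [Function.comp_def, Complex.ofReal_zero] using this

end St11Aux

namespace St11Aux
variable {μ : ℕ} {n : Fin μ → ℕ}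

lemma blockRow_mul (X Y : Matrix (Σ k : Fin μ, Fin (n k)) (Σ k : Fin μ, Fin (n k)) ℂ)
    (s : Fin μ) : blockRow (X * Y) s = blockRow X s * Y := by
  ext a j
  simp [blockRow, Matrix.mul_apply]

lemma mul_blockCol (X Y : Matrix (Σ k : Fin μ, Fin (n k)) (Σ k : Fin μ, Fin (n k)) ℂ)
    (s : Fin μ) : blockCol (X * Y) s = X * blockCol Y s := by
  ext i b
  simp [blockCol, Matrix.mul_apply]

lemma prodPos_shift (Btilde : ℂ → Matrix (Σ k : Fin μ, Fin (n k)) (Σ k : Fin μ, Fin (n k)) ℂ)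
    (v : Fin μ → ℂ) (z : ℂ) (p : ℕ) :
    prodPos n Btilde v (z + 1) p * (vDiag n v * Btilde (1 + z)) = prodPos n Btilde v z (p + 1) := by
  induction p with
  | zero =>
      have h : ((0 : ℕ) : ℂ) + 1 + z = 1 + z := by push_cast; ring
      simp only [prodPos, one_mul, mul_one, h]
  | succ p ih =>
      have h : ((p : ℂ) + 1) + (z + 1) = (((p + 1 : ℕ) : ℂ) + 1) + z := by push_cast; ring
      simp only [prodPos] at ih ⊢
      rw [mul_assoc, ih, h]

lemma prodNeg_shift (Btilde : ℂ → Matrix (Σ k : Fin μ, Fin (n k)) (Σ k : Fin μ, Fin (n k)) ℂ)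
    (v : Fin μ → ℂ) (z : ℂ) (p : ℕ) :
    vDiag n v * Btilde z * prodNeg n Btilde v z p = prodNeg n Btilde v (z + 1) (p + 1) := by
  induction p with
  | zero =>
      have h : -(((0 : ℕ) : ℂ) + 1) + (z + 1) = z := by push_cast; ring
      simp only [prodNeg, one_mul, mul_one, h]
  | succ p ih =>
      have h : -(((p + 1 : ℕ) : ℂ) + 1) + (z + 1) = -((p : ℂ) + 1) + z := by push_cast; ring
      simp only [prodNeg] at ih ⊢
      rw [← mul_assoc, ih, h]

end St11Aux


namespace St11Aux
open NormedSpace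

variable {μ : ℕ} {n : Fin μ → ℕ}
  (Btilde : ℂ → Matrix (Σ k : Fin μ, Fin (n k)) (Σ k : Fin μ, Fin (n k)) ℂ)
  (B : Matrix (Σ k : Fin μ, Fin (n k)) (Σ k : Fin μ, Fin (n k)) ℂ)
  (v : Fin μ → ℂ) (s : Fin μ) (z : ℂ)

lemma seqPos_step (hvs : v s ≠ 0) (p : ℕ) (hp : 1 ≤ p) :
    seqPos n Btilde B v s (z + 1) p * (vDiag n v * Btilde (1 + z))
      = v s • ((((p : ℂ) + 1) / (p : ℂ)) •
          exp (((Real.log (p + 1) - Real.log p : ℝ) : ℂ) •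
            (z • (1 : Matrix (Fin (n s)) (Fin (n s)) ℂ) + diagBlock B s)) *
          seqPos n Btilde B v s z (p + 1)) := by
  have hp0 : (0 : ℝ) < (p : ℝ) := by exact_mod_cast hp
  have hpC : (p : ℂ) ≠ 0 := Nat.cast_ne_zero.2 (by omega)
  have h1 : exp (((Real.log p : ℝ) : ℂ) •
        (-((z + 1) • (1 : Matrix (Fin (n s)) (Fin (n s)) ℂ)) - diagBlock B s))
      = ((p : ℂ))⁻¹ • exp ((-((Real.log p : ℝ) : ℂ)) •
          (z • (1 : Matrix (Fin (n s)) (Fin (n s)) ℂ) + diagBlock B s)) := by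
    have ha : ((Real.log p : ℝ) : ℂ) •
          (-((z + 1) • (1 : Matrix (Fin (n s)) (Fin (n s)) ℂ)) - diagBlock B s)
        = (-((Real.log p : ℝ) : ℂ)) •
            (z • (1 : Matrix (Fin (n s)) (Fin (n s)) ℂ) + diagBlock B s)
          + (-((Real.log p : ℝ) : ℂ)) • (1 : Matrix (Fin (n s)) (Fin (n s)) ℂ) := by
      module
    rw [ha, myexp_smul_add_one]
    congr 1
    rw [← Complex.ofReal_neg, ← Complex.ofReal_exp, Real.exp_neg, Real.exp_log hp0]
    push_cast
    ring
  have h2 : exp (((Real.log ((p + 1 : ℕ)) : ℝ) : ℂ) •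
        (-(z • (1 : Matrix (Fin (n s)) (Fin (n s)) ℂ)) - diagBlock B s))
      = exp ((-((Real.log ((p + 1 : ℕ)) : ℝ) : ℂ)) •
          (z • (1 : Matrix (Fin (n s)) (Fin (n s)) ℂ) + diagBlock B s)) := by
    congr 1
    module
  have h3 : exp (((Real.log (p + 1) - Real.log p : ℝ) : ℂ) •
        (z • (1 : Matrix (Fin (n s)) (Fin (n s)) ℂ) + diagBlock B s)) *
      exp ((-((Real.log ((p + 1 : ℕ)) : ℝ) : ℂ)) •
        (z • (1 : Matrix (Fin (n s)) (Fin (n s)) ℂ) + diagBlock B s))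
      = exp ((-((Real.log p : ℝ) : ℂ)) •
          (z • (1 : Matrix (Fin (n s)) (Fin (n s)) ℂ) + diagBlock B s)) := by
    rw [myexp_mul_exp]
    congr 1
    push_cast
    ring_nf
  simp only [seqPos]
  rw [Matrix.smul_mul, Matrix.mul_assoc, ← blockRow_mul, prodPos_shift]
  rw [h1, Matrix.smul_mul, smul_smul]
  rw [h2]
  rw [Matrix.mul_smul, Matrix.smul_mul, ← Matrix.mul_assoc, h3, smul_smul, smul_smul]
  congr 1
  have hfac : ((p.factorial : ℕ) : ℂ) ≠ 0 := Nat.cast_ne_zero.2 p.factorial_ne_zero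
  have hp1 : ((p : ℂ) + 1) ≠ 0 := by
    have h := Nat.cast_ne_zero (R := ℂ).2 (Nat.succ_ne_zero p)
    push_cast at h
    exact h
  rw [pow_succ, Nat.factorial_succ]
  push_cast
  field_simp [hvs, hpC, hfac, hp1]

lemma seqNeg_step (hvs : v s ≠ 0) (p : ℕ) :
    vDiag n v * Btilde z * seqNeg n Btilde B v s z p
      = (-(v s)) • (seqNeg n Btilde B v s (z + 1) (p + 1) *
          exp (((Real.log p - Real.log (p + 1) : ℝ) : ℂ) •
            (z • (1 : Matrix (Fin (n s)) (Fin (n s)) ℂ) + diagBlock B s))) := by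
  have hne : -(v s) ≠ 0 := neg_ne_zero.2 hvs
  have h2 : exp (((Real.log ((p + 1 : ℕ)) : ℝ) : ℂ) •
        ((z + 1) • (1 : Matrix (Fin (n s)) (Fin (n s)) ℂ) + diagBlock B s))
      = ((p : ℂ) + 1) • exp (((Real.log ((p + 1 : ℕ)) : ℝ) : ℂ) •
          (z • (1 : Matrix (Fin (n s)) (Fin (n s)) ℂ) + diagBlock B s)) := by
    have ha : ((Real.log ((p + 1 : ℕ)) : ℝ) : ℂ) •
          ((z + 1) • (1 : Matrix (Fin (n s)) (Fin (n s)) ℂ) + diagBlock B s)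
        = ((Real.log ((p + 1 : ℕ)) : ℝ) : ℂ) •
            (z • (1 : Matrix (Fin (n s)) (Fin (n s)) ℂ) + diagBlock B s)
          + ((Real.log ((p + 1 : ℕ)) : ℝ) : ℂ) • (1 : Matrix (Fin (n s)) (Fin (n s)) ℂ) := by
      module
    rw [ha, myexp_smul_add_one]
    congr 1
    rw [← Complex.ofReal_exp, Real.exp_log (by positivity)]
    push_cast
    ring
  have h3 : exp (((Real.log ((p + 1 : ℕ)) : ℝ) : ℂ) •
        (z • (1 : Matrix (Fin (n s)) (Fin (n s)) ℂ) + diagBlock B s)) *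
      exp (((Real.log p - Real.log (p + 1) : ℝ) : ℂ) •
        (z • (1 : Matrix (Fin (n s)) (Fin (n s)) ℂ) + diagBlock B s))
      = exp (((Real.log p : ℝ) : ℂ) •
          (z • (1 : Matrix (Fin (n s)) (Fin (n s)) ℂ) + diagBlock B s)) := by
    rw [myexp_mul_exp]
    congr 1
    push_cast
    ring_nf
  simp only [seqNeg]
  rw [Matrix.mul_smul, ← Matrix.mul_assoc, ← mul_blockCol, prodNeg_shift]
  rw [h2]
  rw [Matrix.mul_smul, smul_smul, Matrix.smul_mul, Matrix.mul_assoc, h3, smul_smul]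
  congr 1
  have hfac : ((p.factorial : ℕ) : ℂ) ≠ 0 := Nat.cast_ne_zero.2 p.factorial_ne_zero
  have hp1 : ((p : ℂ) + 1) ≠ 0 := by
    have h := Nat.cast_ne_zero (R := ℂ).2 (Nat.succ_ne_zero p)
    push_cast at h
    exact h
  have hm1 : ((-1 : ℂ)) ^ p ≠ 0 := pow_ne_zero _ (by norm_num)
  rw [pow_succ, Nat.factorial_succ]
  push_cast
  field_simp [hvs, hne, hfac, hp1, hm1]

end St11Aux


open St11Aux

/-- The limits of Proposition 3.1 solve the difference system
`Ψ(z+1) = v·B̃(z)·Ψ(z)`: (i) `R_s(z+1)·v·B̃(1+z) = v_s·R_s(z)`, and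
(ii) `v·B̃(z)·C_s(z) = −v_s·C_s(z+1)`. -/
theorem limits_solve_difference_system
    (μ : ℕ) (hμ : 1 ≤ μ) (n : Fin μ → ℕ) (Λ : Finset ℂ)
    (Btilde : ℂ → Matrix (Σ k : Fin μ, Fin (n k)) (Σ k : Fin μ, Fin (n k)) ℂ)
    (B : Matrix (Σ k : Fin μ, Fin (n k)) (Σ k : Fin μ, Fin (n k)) ℂ)
    (hrat : ∀ i j : (Σ k : Fin μ, Fin (n k)), ∃ P Q : Polynomial ℂ, Q ≠ 0 ∧
      (∀ z : ℂ, Q.eval z = 0 → z ∈ Λ) ∧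
      ∀ z : ℂ, z ∉ Λ → Btilde z i j = P.eval z / Q.eval z)
    (hlin : Tendsto (fun z : ℂ => z⁻¹ • Btilde z) (Bornology.cobounded ℂ) (𝓝 1))
    (hB : Tendsto (fun z : ℂ => Btilde z - z • 1) (Bornology.cobounded ℂ) (𝓝 B))
    (v : Fin μ → ℂ) (hv : Function.Injective v) (hv0 : ∀ k, v k ≠ 0)
    (s : Fin μ) (z : ℂ) :
    ((∀ m : ℤ, m < 0 → ∀ lam ∈ Λ, z ≠ (m : ℂ) + lam) →
      (∀ m : ℤ, m < 0 → ∀ lam ∈ Λ, z + 1 ≠ (m : ℂ) + lam) →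
      ∀ Rz Rz1 : Matrix (Fin (n s)) (Σ k : Fin μ, Fin (n k)) ℂ,
        Tendsto (fun p : ℕ => seqPos n Btilde B v s z p) atTop (𝓝 Rz) →
        Tendsto (fun p : ℕ => seqPos n Btilde B v s (z + 1) p) atTop (𝓝 Rz1) →
        Rz1 * (vDiag n v * Btilde (1 + z)) = v s • Rz) ∧
    ((∀ m : ℤ, 0 < m → ∀ lam ∈ Λ, z ≠ (m : ℂ) + lam) →
      (∀ m : ℤ, 0 < m → ∀ lam ∈ Λ, z + 1 ≠ (m : ℂ) + lam) →
      ∀ Cz Cz1 : Matrix (Σ k : Fin μ, Fin (n k)) (Fin (n s)) ℂ,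
        Tendsto (fun p : ℕ => seqNeg n Btilde B v s z p) atTop (𝓝 Cz) →
        Tendsto (fun p : ℕ => seqNeg n Btilde B v s (z + 1) p) atTop (𝓝 Cz1) →
        vDiag n v * Btilde z * Cz = (-(v s)) • Cz1) := by
  constructor
  · intro _ _ Rz Rz1 hRz hRz1
    have hkey : ∀ᶠ p : ℕ in atTop,
        seqPos n Btilde B v s (z + 1) p * (vDiag n v * Btilde (1 + z))
          = (fun p : ℕ => v s • ((((p : ℂ) + 1) / (p : ℂ)) •
              NormedSpace.exp (((Real.log (p + 1) - Real.log p : ℝ) : ℂ) •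
                (z • (1 : Matrix (Fin (n s)) (Fin (n s)) ℂ) + diagBlock B s)) *
              seqPos n Btilde B v s z (p + 1))) p := by
      filter_upwards [Filter.eventually_ge_atTop 1] with p hp
      exact St11Aux.seqPos_step Btilde B v s z (hv0 s) p hp
    have hL : Tendsto (fun p : ℕ =>
          seqPos n Btilde B v s (z + 1) p * (vDiag n v * Btilde (1 + z)))
        atTop (𝓝 (Rz1 * (vDiag n v * Btilde (1 + z)))) :=
      St11Aux.tendsto_mat_mul hRz1 tendsto_const_nhds
    have hcorr : Tendsto (fun p : ℕ => (((p : ℂ) + 1) / (p : ℂ)) •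
        NormedSpace.exp (((Real.log (p + 1) - Real.log p : ℝ) : ℂ) •
          (z • (1 : Matrix (Fin (n s)) (Fin (n s)) ℂ) + diagBlock B s)))
        atTop (𝓝 (1 : Matrix (Fin (n s)) (Fin (n s)) ℂ)) := by
      have h1 : Tendsto (fun p : ℕ => ((Real.log (p + 1) - Real.log p : ℝ) : ℂ) •
          (z • (1 : Matrix (Fin (n s)) (Fin (n s)) ℂ) + diagBlock B s)) atTop (𝓝 0) := by
        simpa using St11Aux.tendsto_logdiff.smul_const
          (z • (1 : Matrix (Fin (n s)) (Fin (n s)) ℂ) + diagBlock B s)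
      have h2 := St11Aux.myexp_tendsto_one h1
      have h3 := St11Aux.tendsto_ratio.smul h2
      simpa using h3
    have hR : Tendsto (fun p : ℕ => v s • ((((p : ℂ) + 1) / (p : ℂ)) •
        NormedSpace.exp (((Real.log (p + 1) - Real.log p : ℝ) : ℂ) •
          (z • (1 : Matrix (Fin (n s)) (Fin (n s)) ℂ) + diagBlock B s)) *
        seqPos n Btilde B v s z (p + 1))) atTop (𝓝 (v s • Rz)) := by
      have h4 := St11Aux.tendsto_mat_mul hcorr (hRz.comp (tendsto_add_atTop_nat 1))
      simpa using h4.const_smul (v s)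
    exact tendsto_nhds_unique (hL.congr' hkey) hR
  · intro _ _ Cz Cz1 hCz hCz1
    have hL : Tendsto (fun p : ℕ => vDiag n v * Btilde z * seqNeg n Btilde B v s z p)
        atTop (𝓝 (vDiag n v * Btilde z * Cz)) :=
      St11Aux.tendsto_mat_mul tendsto_const_nhds hCz
    have hG : Tendsto (fun p : ℕ => NormedSpace.exp
        (((Real.log p - Real.log (p + 1) : ℝ) : ℂ) •
          (z • (1 : Matrix (Fin (n s)) (Fin (n s)) ℂ) + diagBlock B s))) atTop (𝓝 1) := by
      have h0 : Tendsto (fun p : ℕ => ((Real.log p - Real.log (p + 1) : ℝ) : ℂ))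
          atTop (𝓝 0) := by
        have h := St11Aux.tendsto_logdiff.neg
        simpa [← Complex.ofReal_neg, neg_sub] using h
      have h1 : Tendsto (fun p : ℕ => ((Real.log p - Real.log (p + 1) : ℝ) : ℂ) •
          (z • (1 : Matrix (Fin (n s)) (Fin (n s)) ℂ) + diagBlock B s)) atTop (𝓝 0) := by
        simpa using h0.smul_const
          (z • (1 : Matrix (Fin (n s)) (Fin (n s)) ℂ) + diagBlock B s)
      exact St11Aux.myexp_tendsto_one h1
    have hR : Tendsto (fun p : ℕ => (-(v s)) •
        (seqNeg n Btilde B v s (z + 1) (p + 1) *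
          NormedSpace.exp (((Real.log p - Real.log (p + 1) : ℝ) : ℂ) •
            (z • (1 : Matrix (Fin (n s)) (Fin (n s)) ℂ) + diagBlock B s))))
        atTop (𝓝 ((-(v s)) • Cz1)) := by
      have h4 := St11Aux.tendsto_mat_mul (hCz1.comp (tendsto_add_atTop_nat 1)) hG
      simpa using h4.const_smul (-(v s))
    have hL' := Filter.Tendsto.congr
      (fun p => St11Aux.seqNeg_step Btilde B v s z (hv0 s) p) hL
    exact tendsto_nhds_unique hL' hR

end
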